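/- For every real number k ≥ 1 there exists a constant c > 0, depending only on k, such that: (a) for every real R > 1, (2·√(R² − 1))^k ≤ c · 2·R^k·∫_{1/R}^{1} u^{k−1}/√(1 − u²) du; and (b) for every real R ≥ 2, 2·R^k·∫_{1/R}^{1} u^{k−1}/√(1 − u²) du ≤ c · (2·√(R² − 1))^k. -/

import Mathlib

set_option maxHeartbeats 1000000

open Real MeasureTheory Set intervalIntegral

noncomputable def gAux : ℝ → ℝ := fun u => (1 - u) ^ (-(1/2) : ℝ)

lemma gAux_int (a : ℝ) : IntervalIntegrable gAux volume a 1 := by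
  have h := (intervalIntegrable_rpow' (a := 1 - a) (b := 1 - 1)
    (by norm_num : (-1:ℝ) < -(1/2))).comp_sub_left 1
  unfold gAux
  simpa using h

lemma gAux_integral (a : ℝ) : (∫ u in a..1, gAux u) = 2 * Real.sqrt (1 - a) := by
  have h2 : (∫ u in a..1, gAux u)
      = ∫ x in (1-(1:ℝ))..(1-a), (fun y : ℝ => y ^ (-(1/2):ℝ)) x :=
    intervalIntegral.integral_comp_sub_left (fun y : ℝ => y ^ (-(1/2):ℝ)) 1
  rw [h2, integral_rpow (Or.inl (by norm_num : (-1:ℝ) < -(1/2)))]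
  norm_num
  rw [← Real.sqrt_eq_rpow]
  ring

lemma f_le_gAux {k : ℝ} (hk : 1 ≤ k) {u : ℝ} (h0 : 0 ≤ u) (h1 : u ≤ 1) :
    u ^ (k-1) / Real.sqrt (1 - u^2) ≤ gAux u := by
  rcases h1.eq_or_lt with h | h
  · subst h
    simp [gAux, Real.zero_rpow (show (-(1/2):ℝ) ≠ 0 by norm_num)]
  · have hgu : gAux u = 1 / Real.sqrt (1 - u) := by
      rw [gAux]
      rw [Real.rpow_neg (by linarith), ← Real.sqrt_eq_rpow, one_div]
    rw [hgu]
    have hnum : u ^ (k-1) ≤ 1 := Real.rpow_le_one h0 h1 (by linarith)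
    have hd : 0 < Real.sqrt (1 - u) := Real.sqrt_pos.mpr (by linarith)
    have hdd : Real.sqrt (1 - u) ≤ Real.sqrt (1 - u^2) := by
      apply Real.sqrt_le_sqrt; nlinarith
    exact div_le_div₀ (by norm_num) hnum hd hdd

lemma f_int {k : ℝ} (hk : 1 ≤ k) {a : ℝ} (h0 : 0 ≤ a) (h1 : a ≤ 1) :
    IntervalIntegrable (fun u => u ^ (k-1) / Real.sqrt (1 - u^2)) volume a 1 := by
  apply (gAux_int a).mono_fun'
  · apply Measurable.aestronglyMeasurable
    fun_prop
  · rw [Set.uIoc_of_le h1]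
    filter_upwards [ae_restrict_mem measurableSet_Ioc] with u hu
    have hu0 : 0 ≤ u := le_trans h0 hu.1.le
    rw [Real.norm_eq_abs, abs_of_nonneg (div_nonneg (Real.rpow_nonneg hu0 _) (Real.sqrt_nonneg _))]
    exact f_le_gAux hk hu0 hu.2

lemma f_integral_le {k : ℝ} (hk : 1 ≤ k) {a : ℝ} (h0 : 0 ≤ a) (h1 : a ≤ 1) :
    (∫ u in a..1, u ^ (k-1) / Real.sqrt (1 - u^2)) ≤ 2 := by
  have h := intervalIntegral.integral_mono_on h1 (f_int hk h0 h1) (gAux_int a)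
    (fun u hu => f_le_gAux hk (le_trans h0 hu.1) hu.2)
  rw [gAux_integral] at h
  have h2 : Real.sqrt (1 - a) ≤ 1 := Real.sqrt_le_one.mpr (by linarith)
  linarith

lemma f_integral_ge {k : ℝ} (hk : 1 ≤ k) {a : ℝ} (h0 : 0 < a) (h1 : a < 1) :
    (1 - a) * (a ^ (k-1) / Real.sqrt (1 - a^2))
      ≤ ∫ u in a..1, u ^ (k-1) / Real.sqrt (1 - u^2) := by
  have hc : IntervalIntegrable (fun _ : ℝ => a ^ (k-1) / Real.sqrt (1 - a^2)) volume a 1 :=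
    intervalIntegrable_const
  have h1ne : ∀ᵐ u ∂(volume.restrict (Icc a 1)), u ≠ (1:ℝ) := by
    rw [MeasureTheory.ae_iff]
    have hs : {u : ℝ | ¬ u ≠ 1} = {(1:ℝ)} := by ext x; simp
    rw [hs, Measure.restrict_apply (measurableSet_singleton 1)]
    exact measure_mono_null Set.inter_subset_left (by simp)
  have hb := intervalIntegral.integral_mono_ae_restrict h1.le hc (f_int hk h0.le h1.le) ?_
  · simpa [smul_eq_mul, mul_div_assoc] using hb
  · filter_upwards [h1ne, ae_restrict_mem measurableSet_Icc] with u hne hu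
    have hu1 : u < 1 := lt_of_le_of_ne hu.2 hne
    have hu0 : 0 < u := lt_of_lt_of_le h0 hu.1
    exact div_le_div₀ (Real.rpow_nonneg hu0.le _)
      (Real.rpow_le_rpow h0.le hu.1 (by linarith))
      (Real.sqrt_pos.mpr (by nlinarith [hu1, hu0]))
      (Real.sqrt_le_sqrt (by nlinarith [mul_self_le_mul_self h0.le hu.1]))

lemma f_integral_ge' {k : ℝ} (hk : 1 ≤ k) {a : ℝ} (h0 : 1/2 ≤ a) (h1 : a < 1) :
    (1/2:ℝ)^(k-1) / Real.sqrt 2 * Real.sqrt (1 - a)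
      ≤ ∫ u in a..1, u ^ (k-1) / Real.sqrt (1 - u^2) := by
  have ha0 : 0 < a := by linarith
  have base := f_integral_ge hk ha0 h1
  have hs : 0 < Real.sqrt (1-a) := Real.sqrt_pos.mpr (by linarith)
  have hP : ((1:ℝ)/2)^(k-1) ≤ a^(k-1) :=
    Real.rpow_le_rpow (by norm_num) h0 (by linarith)
  have hden : Real.sqrt (1-a^2) ≤ Real.sqrt 2 * Real.sqrt (1-a) := by
    rw [← Real.sqrt_mul (by norm_num : (0:ℝ) ≤ 2)]
    apply Real.sqrt_le_sqrt; nlinarith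
  have hden0 : 0 < Real.sqrt (1-a^2) := Real.sqrt_pos.mpr (by nlinarith)
  have step : ((1:ℝ)/2)^(k-1) / (Real.sqrt 2 * Real.sqrt (1-a)) ≤ a^(k-1) / Real.sqrt (1-a^2) :=
    div_le_div₀ (Real.rpow_nonneg ha0.le _) hP hden0 hden
  have heq : (1-a) * (((1:ℝ)/2)^(k-1) / (Real.sqrt 2 * Real.sqrt (1-a)))
      = ((1:ℝ)/2)^(k-1) / Real.sqrt 2 * Real.sqrt (1-a) := by
    rw [show (1:ℝ)-a = Real.sqrt (1-a) * Real.sqrt (1-a) from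
      (Real.mul_self_sqrt (by linarith)).symm]
    field_simp
    rw [Real.sqrt_sq (Real.sqrt_nonneg _)]
  have := mul_le_mul_of_nonneg_left step (show (0:ℝ) ≤ 1 - a by linarith)
  rw [heq] at this
  linarith


/-- Analytic core of Lemma 4.2: the `k`-th power of the excursion `2√(R² − 1)` and the flow
integral `2 R^k ∫_{1/R}^{1} u^{k-1}/√(1-u²) du` are comparable up to a constant depending
only on `k`. -/
theorem excursion_flow_integral_comparable (k : ℝ) (hk : 1 ≤ k) :
    ∃ c : ℝ, 0 < c ∧
      (∀ R : ℝ, 1 < R →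
        (2 * Real.sqrt (R ^ 2 - 1)) ^ k ≤
          c * (2 * R ^ k * ∫ u in (1 / R)..1, u ^ (k - 1) / Real.sqrt (1 - u ^ 2))) ∧
      (∀ R : ℝ, 2 ≤ R →
        2 * R ^ k * (∫ u in (1 / R)..1, u ^ (k - 1) / Real.sqrt (1 - u ^ 2)) ≤
          c * (2 * Real.sqrt (R ^ 2 - 1)) ^ k) := by
  have hk0 : (0:ℝ) ≤ k := by linarith
  set P : ℝ := ((1:ℝ)/2) ^ (k-1) with hPdef
  have hPpos : 0 < P := Real.rpow_pos_of_pos (by norm_num) _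
  have h12 : (0:ℝ) < (12:ℝ) ^ k := Real.rpow_pos_of_pos (by norm_num) _
  have h6pos : (0:ℝ) < (6:ℝ) ^ k := Real.rpow_pos_of_pos (by norm_num) _
  have e1 : P = 2 * ((1:ℝ)/2)^k := by
    rw [hPdef, Real.rpow_sub (by norm_num : (0:ℝ) < 1/2), Real.rpow_one]; ring
  have e2 : (12:ℝ)^k * ((1:ℝ)/2)^k = (6:ℝ)^k := by
    rw [← Real.mul_rpow (by norm_num) (by norm_num)]; norm_num
  have e3 : (12:ℝ)^k * P = 2 * (6:ℝ)^k := by rw [e1, ← e2]; ring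
  have hsqrt3 : Real.sqrt 3 ≤ 2 := by
    nlinarith [Real.sq_sqrt (show (0:ℝ) ≤ 3 by norm_num), Real.sqrt_nonneg 3]
  have hcp : (2 * Real.sqrt 3)^k ≤ (12:ℝ)^k * P := by
    have h1 : (2 * Real.sqrt 3)^k ≤ (6:ℝ)^k :=
      Real.rpow_le_rpow (by positivity) (by nlinarith) hk0
    rw [e3]; linarith
  have h2p : (2:ℝ)^k ≤ (12:ℝ)^k * P := by
    have h1 : (2:ℝ)^k ≤ (6:ℝ)^k :=
      Real.rpow_le_rpow (by norm_num) (by norm_num) hk0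
    rw [e3]; linarith
  have hs20 : (0:ℝ) < Real.sqrt 2 := Real.sqrt_pos.mpr (by norm_num)
  have h22 : Real.sqrt 2 * Real.sqrt 2 = 2 := Real.mul_self_sqrt (by norm_num)
  refine ⟨(12:ℝ)^k + 4, by positivity, ?_, ?_⟩
  · -- part (a)
    intro R hR
    have hR0 : (0:ℝ) < R := by linarith
    have ha0 : 0 < 1/R := by positivity
    have ha1 : (1:ℝ)/R < 1 := by rw [div_lt_one hR0]; linarith
    have hRk1 : (1:ℝ) ≤ R ^ k := by
      calc (1:ℝ) = R ^ (0:ℝ) := (Real.rpow_zero R).symm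
        _ ≤ R ^ k := Real.rpow_le_rpow_of_exponent_le hR.le hk0
    have hRk0 : (0:ℝ) < R ^ k := Real.rpow_pos_of_pos hR0 _
    have hInn : 0 ≤ ∫ u in (1/R)..1, u ^ (k-1) / Real.sqrt (1 - u^2) :=
      intervalIntegral.integral_nonneg ha1.le (fun u hu =>
        div_nonneg (Real.rpow_nonneg (le_trans ha0.le hu.1) _) (Real.sqrt_nonneg _))
    rcases le_or_gt R 2 with hR2 | hR2
    · -- 1 < R ≤ 2
      have hhalf : (1:ℝ)/2 ≤ 1/R := one_div_le_one_div_of_le hR0 hR2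
      have hI1 := f_integral_ge' hk hhalf ha1
      have hs10 : 0 < Real.sqrt (R-1) := Real.sqrt_pos.mpr (by linarith)
      have hsr : Real.sqrt (R-1) / Real.sqrt 2 ≤ Real.sqrt (1 - 1/R) := by
        rw [div_le_iff₀ hs20]
        have key : Real.sqrt (R-1) ≤ Real.sqrt 2 * Real.sqrt (1 - 1/R) := by
          rw [← Real.sqrt_mul (by norm_num : (0:ℝ) ≤ 2)]
          apply Real.sqrt_le_sqrt
          have h1 : (1:ℝ) - 1/R = (R-1)/R := by field_simp
          rw [h1, ← mul_div_assoc, le_div_iff₀ hR0]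
          nlinarith
        linarith [key]
      have hI2 : P * Real.sqrt (R-1) / 2 ≤
          ∫ u in (1/R)..1, u ^ (k-1) / Real.sqrt (1 - u^2) := by
        have h' : P / Real.sqrt 2 * (Real.sqrt (R-1) / Real.sqrt 2)
            ≤ P / Real.sqrt 2 * Real.sqrt (1 - 1/R) :=
          mul_le_mul_of_nonneg_left hsr (by positivity)
        have heq2 : P / Real.sqrt 2 * (Real.sqrt (R-1) / Real.sqrt 2)
            = P * Real.sqrt (R-1) / 2 := by
          rw [div_mul_div_comm, h22]
        rw [heq2] at h'
        linarith [hI1]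
      have hL1 : Real.sqrt (R^2-1) ≤ Real.sqrt 3 * Real.sqrt (R-1) := by
        rw [← Real.sqrt_mul (by norm_num : (0:ℝ) ≤ 3)]
        exact Real.sqrt_le_sqrt (by nlinarith)
      have hL2 : (2 * Real.sqrt (R^2-1))^k ≤ ((2*Real.sqrt 3) * Real.sqrt (R-1))^k := by
        apply Real.rpow_le_rpow (by positivity) ?_ hk0
        nlinarith [hL1]
      have hL3 : ((2*Real.sqrt 3) * Real.sqrt (R-1))^k
          = (2*Real.sqrt 3)^k * (Real.sqrt (R-1))^k :=
        Real.mul_rpow (by positivity) hs10.le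
      have hL4 : (Real.sqrt (R-1))^k ≤ Real.sqrt (R-1) := by
        calc (Real.sqrt (R-1))^k ≤ (Real.sqrt (R-1))^(1:ℝ) :=
              Real.rpow_le_rpow_of_exponent_ge hs10 (Real.sqrt_le_one.mpr (by linarith)) hk
          _ = Real.sqrt (R-1) := Real.rpow_one _
      have hstep : P * Real.sqrt (R-1) ≤
          2 * R^k * ∫ u in (1/R)..1, u ^ (k-1) / Real.sqrt (1 - u^2) := by
        nlinarith [mul_le_mul hRk1 hI2 (by positivity) hRk0.le]
      calc (2 * Real.sqrt (R^2-1))^k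
          ≤ (2*Real.sqrt 3)^k * (Real.sqrt (R-1))^k := hL2.trans (le_of_eq hL3)
        _ ≤ (2*Real.sqrt 3)^k * Real.sqrt (R-1) :=
            mul_le_mul_of_nonneg_left hL4 (by positivity)
        _ ≤ ((12:ℝ)^k * P) * Real.sqrt (R-1) := mul_le_mul_of_nonneg_right hcp hs10.le
        _ = (12:ℝ)^k * (P * Real.sqrt (R-1)) := by ring
        _ ≤ (12:ℝ)^k * (2 * R^k * ∫ u in (1/R)..1, u ^ (k-1) / Real.sqrt (1 - u^2)) :=
            mul_le_mul_of_nonneg_left hstep h12.le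
        _ ≤ ((12:ℝ)^k + 4) * (2 * R^k * ∫ u in (1/R)..1, u ^ (k-1) / Real.sqrt (1 - u^2)) :=
            mul_le_mul_of_nonneg_right (by linarith)
              (mul_nonneg (by positivity) hInn)
    · -- R > 2
      have h1R12 : (1:ℝ)/R ≤ 1/2 := one_div_le_one_div_of_le (by norm_num) hR2.le
      have hint2 := f_int hk (show (0:ℝ) ≤ 1/2 by norm_num) (by norm_num)
      have hint1 : IntervalIntegrable (fun u => u ^ (k-1) / Real.sqrt (1 - u^2))
          volume (1/R) (1/2) := by
        apply (f_int hk ha0.le ha1.le).mono_set'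
        rw [Set.uIoc_of_le ha1.le, Set.uIoc_of_le h1R12]
        exact Set.Ioc_subset_Ioc_right (by norm_num)
      have hsplit := intervalIntegral.integral_add_adjacent_intervals hint1 hint2
      have hp1 : 0 ≤ ∫ u in (1/R)..(1/2:ℝ), u ^ (k-1) / Real.sqrt (1 - u^2) :=
        intervalIntegral.integral_nonneg h1R12 (fun u hu =>
          div_nonneg (Real.rpow_nonneg (le_trans ha0.le hu.1) _) (Real.sqrt_nonneg _))
      have hp2 := f_integral_ge' hk (le_refl ((1:ℝ)/2)) (by norm_num)
      have heq3 : P / Real.sqrt 2 * Real.sqrt (1 - 1/2) = P / 2 := by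
        rw [show (1:ℝ) - 1/2 = (2:ℝ)⁻¹ by norm_num, Real.sqrt_inv]
        field_simp
        rw [Real.sq_sqrt (by norm_num)]
      rw [heq3] at hp2
      have hIge : P / 2 ≤ ∫ u in (1/R)..1, u ^ (k-1) / Real.sqrt (1 - u^2) := by
        rw [← hsplit]; linarith
      have hL1' : (2 * Real.sqrt (R^2-1))^k ≤ ((2:ℝ)*R)^k := by
        apply Real.rpow_le_rpow (by positivity) ?_ hk0
        have hsq : Real.sqrt (R^2-1) ≤ R := by
          calc Real.sqrt (R^2-1) ≤ Real.sqrt (R^2) := Real.sqrt_le_sqrt (by linarith)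
            _ = R := Real.sqrt_sq (by linarith)
        linarith
      have hL2' : ((2:ℝ)*R)^k = 2^k * R^k := Real.mul_rpow (by norm_num) (by linarith)
      calc (2 * Real.sqrt (R^2-1))^k
          ≤ (2:ℝ)^k * R^k := hL1'.trans (le_of_eq hL2')
        _ ≤ ((12:ℝ)^k * P) * R^k := mul_le_mul_of_nonneg_right h2p hRk0.le
        _ = (12:ℝ)^k * (2 * R^k * (P/2)) := by ring
        _ ≤ (12:ℝ)^k * (2 * R^k * ∫ u in (1/R)..1, u ^ (k-1) / Real.sqrt (1 - u^2)) :=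
            mul_le_mul_of_nonneg_left
              (mul_le_mul_of_nonneg_left hIge (by positivity)) h12.le
        _ ≤ ((12:ℝ)^k + 4) * (2 * R^k * ∫ u in (1/R)..1, u ^ (k-1) / Real.sqrt (1 - u^2)) :=
            mul_le_mul_of_nonneg_right (by linarith)
              (mul_nonneg (by positivity) hInn)
  · -- part (b)
    intro R hR2
    have hR0 : (0:ℝ) < R := by linarith
    have ha0 : 0 < 1/R := by positivity
    have ha1 : (1:ℝ)/R ≤ 1 := by rw [div_le_one hR0]; linarith
    have hRk0 : (0:ℝ) < R ^ k := Real.rpow_pos_of_pos hR0 _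
    have hIle := f_integral_le hk ha0.le ha1
    have hX : R ≤ 2 * Real.sqrt (R^2-1) := by
      have h4 : R^2 ≤ 4*(R^2-1) := by nlinarith
      calc R = Real.sqrt (R^2) := (Real.sqrt_sq hR0.le).symm
        _ ≤ Real.sqrt (4*(R^2-1)) := Real.sqrt_le_sqrt h4
        _ = 2 * Real.sqrt (R^2-1) := by
            rw [show (4:ℝ)*(R^2-1) = 2^2*(R^2-1) by ring,
              Real.sqrt_mul (by positivity) , Real.sqrt_sq (by norm_num)]
    have hXk : R^k ≤ (2 * Real.sqrt (R^2-1))^k :=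
      Real.rpow_le_rpow hR0.le hX hk0
    have hXk0 : (0:ℝ) ≤ (2 * Real.sqrt (R^2-1))^k := Real.rpow_nonneg (by positivity) _
    calc 2 * R^k * (∫ u in (1/R)..1, u ^ (k-1) / Real.sqrt (1 - u^2))
        ≤ 2 * R^k * 2 := mul_le_mul_of_nonneg_left hIle (by positivity)
      _ = 4 * R^k := by ring
      _ ≤ 4 * (2 * Real.sqrt (R^2-1))^k := mul_le_mul_of_nonneg_left hXk (by norm_num)
      _ ≤ ((12:ℝ)^k + 4) * (2 * Real.sqrt (R^2-1))^k :=
          mul_le_mul_of_nonneg_right (by linarith) hXk0
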